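/- Let n ≥ 2 and consider the map f : S^{n-1} → S^{n-1} given by f(x) = -x (the antipodal/inversion map). If ω is a differential (n-1)-form on S^{n-1} satisfying f*ω = (-1)^n ω, then for any two distinct points x₁, x₂ ∈ ℝ^n, the integral over y ∈ ℝ^n \ {x₁,x₂} of the wedge product of the pullbacks of ω under the two direction maps y ↦ (y-x₁)/|y-x₁| and y ↦ (y-x₂)/|y-x₂| vanishes. -/

import Mathlib

open MeasureTheory

/-!
STATEMENT 0: Let `n ≥ 2` and let `f : S^{n-1} → S^{n-1}` be the antipodal map `f(x) = -x`.
If `ω` is a differential `(n-1)`-form on `S^{n-1}` (extended to `ℝ^n \ {0}`) satisfying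
`f*ω = (-1)^n ω`, then for any two distinct points `x₁, x₂ ∈ ℝ^n`, the integral over
`y ∈ ℝ^n` of (the relevant top-degree component of) the wedge product `π₁*ω ∧ π₂*ω` of the
pullbacks of `ω` under the two direction maps `y ↦ (y-x₁)/|y-x₁|` and `y ↦ (y-x₂)/|y-x₂|`
vanishes.

Here, as in the fiber-integral interpretation, the direction maps are regarded as maps on the
configuration space `ℝ^n × ℝ^n × ℝ^n ∋ (x₁, x₂, y)`; the wedge `π₁*ω ∧ π₂*ω` is a
`(2n-2)`-form there, and the statement is that for each fixed choice of `n - 2` "horizontal"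
vectors `w_j` (constant in the `x₁, x₂` directions) the coefficient obtained by evaluating the
wedge on the `n` "vertical" coordinate vectors `∂/∂y_i` together with the `w_j`'s integrates to
zero over the fiber `y ∈ ℝ^n`.

The pullback of an alternating form under a map `g` at `p` evaluates the form at `g p` on the
images of the input vectors under the derivative `D g (p)`; the wedge of two scalar-valued
alternating forms is `AlternatingMap.domCoprod` followed by the identification `ℝ ⊗ ℝ ≅ ℝ`.
-/

noncomputable section

variable (n : ℕ)

/-- The configuration space of `(x₁, x₂, y)`. -/
abbrev Conf3 := EuclideanSpace ℝ (Fin n) × EuclideanSpace ℝ (Fin n) × EuclideanSpace ℝ (Fin n)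

/-- Direction map `π₁ : (x₁, x₂, y) ↦ (y - x₁)/|y - x₁|`. -/
def dirMap1 (p : Conf3 n) : EuclideanSpace ℝ (Fin n) := ‖p.2.2 - p.1‖⁻¹ • (p.2.2 - p.1)

/-- Direction map `π₂ : (x₁, x₂, y) ↦ (y - x₂)/|y - x₂|`. -/
def dirMap2 (p : Conf3 n) : EuclideanSpace ℝ (Fin n) := ‖p.2.2 - p.2.1‖⁻¹ • (p.2.2 - p.2.1)

/-- The pullback `(g*ω)_p` of an `(n-1)`-form `ω` under `g` at the point `p`. -/
def formPullback
    (ω : EuclideanSpace ℝ (Fin n) →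
      AlternatingMap ℝ (EuclideanSpace ℝ (Fin n)) ℝ (Fin (n - 1)))
    (g : Conf3 n → EuclideanSpace ℝ (Fin n)) (p : Conf3 n) :
    AlternatingMap ℝ (Conf3 n) ℝ (Fin (n - 1)) :=
  (ω (g p)).compLinearMap (fderiv ℝ g p : Conf3 n →ₗ[ℝ] EuclideanSpace ℝ (Fin n))

/-! ### Auxiliary general lemmas -/

section GeneralAux

open TensorProduct Equiv

set_option linter.unusedSectionVars false

variable {ιa ιb : Type*} [Fintype ιa] [Fintype ιb] [DecidableEq ιa] [DecidableEq ιb]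
variable {R' : Type*} {Mᵢ M₂ N₁ N₂ : Type*} [CommSemiring R'] [AddCommGroup N₁] [Module R' N₁]
  [AddCommGroup N₂] [Module R' N₂] [AddCommMonoid Mᵢ] [Module R' Mᵢ]
  [AddCommMonoid M₂] [Module R' M₂]

theorem my_domCoprod_compLinearMap (a : Mᵢ [⋀^ιa]→ₗ[R'] N₁) (b : Mᵢ [⋀^ιb]→ₗ[R'] N₂)
    (g : M₂ →ₗ[R'] Mᵢ) :
    (a.compLinearMap g).domCoprod (b.compLinearMap g) = (a.domCoprod b).compLinearMap g := by
  ext v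
  simp only [AlternatingMap.domCoprod_apply, AlternatingMap.compLinearMap_apply,
    MultilinearMap.sum_apply]
  refine Finset.sum_congr rfl fun σ _ => ?_
  induction σ using Quotient.inductionOn' with
  | h σ =>
    simp [AlternatingMap.domCoprod.summand, Function.comp_def]

theorem my_domCoprod_neg_neg (a : Mᵢ [⋀^ιa]→ₗ[R'] N₁) (b : Mᵢ [⋀^ιb]→ₗ[R'] N₂) :
    (-a).domCoprod (-b) = a.domCoprod b := by
  rw [← AlternatingMap.domCoprod'_apply, ← AlternatingMap.domCoprod'_apply,
    TensorProduct.neg_tmul, TensorProduct.tmul_neg, neg_neg]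

theorem my_domCoprod_smul_smul (c : R') (a : Mᵢ [⋀^ιa]→ₗ[R'] N₁) (b : Mᵢ [⋀^ιb]→ₗ[R'] N₂) :
    (c • a).domCoprod (c • b) = (c * c) • a.domCoprod b := by
  rw [← AlternatingMap.domCoprod'_apply, ← AlternatingMap.domCoprod'_apply,
    TensorProduct.smul_tmul_smul, _root_.map_smul]

variable {ι : Type*} [DecidableEq ι]

/-- product of the transpositions `(inl i, inr i)` over a list of indices. -/
def blockSwapList (l : List ι) : Equiv.Perm (ι ⊕ ι) :=
  (l.map (fun i => Equiv.swap (Sum.inl i) (Sum.inr i))).prod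

theorem blockSwapList_apply (l : List ι) (hl : l.Nodup) (x : ι ⊕ ι) :
    blockSwapList l x =
      if (Sum.elim id id x) ∈ l then Sum.swap x else x := by
  induction l with
  | nil => simp [blockSwapList]
  | cons a t ih =>
    have hat : a ∉ t := (List.nodup_cons.mp hl).1
    have ht : t.Nodup := (List.nodup_cons.mp hl).2
    simp only [blockSwapList, List.map_cons, List.prod_cons, Equiv.Perm.mul_apply]
    rw [show ((t.map (fun i => Equiv.swap (Sum.inl i) (Sum.inr i))).prod :
        Equiv.Perm (ι ⊕ ι)) = blockSwapList t from rfl, ih ht]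
    rcases x with i | i <;> by_cases hit : i ∈ t <;>
      simp [hit, List.mem_cons, Equiv.swap_apply_def] <;>
    · by_cases hia : i = a <;> simp_all [Equiv.swap_apply_def]

/-- The permutation of `ι ⊕ ι` exchanging the two copies of `ι`. -/
def blockSwap (ι : Type*) [Fintype ι] [DecidableEq ι] : Equiv.Perm (ι ⊕ ι) :=
  blockSwapList (Finset.univ : Finset ι).toList

variable [Fintype ι]

theorem blockSwap_apply (x : ι ⊕ ι) : blockSwap ι x = Sum.swap x := by
  rw [blockSwap, blockSwapList_apply _ (Finset.nodup_toList _),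
    if_pos (by simp [Finset.mem_toList])]

theorem blockSwap_sign : Equiv.Perm.sign (blockSwap ι) = (-1) ^ (Fintype.card ι) := by
  rw [blockSwap, blockSwapList, Equiv.Perm.sign_prod_list_swap]
  · rw [List.length_map, Finset.length_toList]; rfl
  · intro g hg
    simp only [List.mem_map] at hg
    obtain ⟨i, -, rfl⟩ := hg
    exact ⟨_, _, by simp, rfl⟩

theorem blockSwap_mul_self : blockSwap ι * blockSwap ι = 1 := by
  ext x; simp [blockSwap_apply]

theorem conj_blockSwap (sl sr : Equiv.Perm ι) :
    (blockSwap ι)⁻¹ * (Equiv.Perm.sumCongr sl sr) * blockSwap ι = Equiv.Perm.sumCongr sr sl := by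
  have hinv : (blockSwap ι)⁻¹ = blockSwap ι := by
    rw [inv_eq_iff_mul_eq_one, blockSwap_mul_self]
  rw [hinv]
  ext x
  rcases x with i | i <;> simp [blockSwap_apply]

variable {Mᵣ : Type*} [AddCommMonoid Mᵣ] [Module ℝ Mᵣ]

theorem my_domCoprod_swap (a b : Mᵣ [⋀^ι]→ₗ[ℝ] ℝ) (v : ι ⊕ ι → Mᵣ) :
    (TensorProduct.lid ℝ ℝ) ((a.domCoprod b) v) =
      (-1 : ℝ) ^ (Fintype.card ι) * (TensorProduct.lid ℝ ℝ) ((b.domCoprod a) v) := by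
  classical
  have wd : ∀ σ₁ σ₂ : Equiv.Perm (ι ⊕ ι),
      (QuotientGroup.leftRel (Equiv.Perm.sumCongrHom ι ι).range) σ₁ σ₂ →
      (QuotientGroup.leftRel (Equiv.Perm.sumCongrHom ι ι).range) (σ₁ * blockSwap ι)
        (σ₂ * blockSwap ι) := by
    intro σ₁ σ₂ h
    rw [QuotientGroup.leftRel_apply] at h ⊢
    obtain ⟨⟨sl, sr⟩, h⟩ := h
    refine ⟨⟨sr, sl⟩, ?_⟩
    simp only [Equiv.Perm.sumCongrHom_apply] at h ⊢
    rw [← conj_blockSwap sl sr, h]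
    group
  let φ : Equiv.Perm.ModSumCongr ι ι → Equiv.Perm.ModSumCongr ι ι :=
    Quotient.map' (fun τ => τ * blockSwap ι) (fun a b h => wd a b h)
  have hφ : Function.Involutive φ := by
    intro σ
    induction σ using Quotient.inductionOn' with
    | h τ =>
      show Quotient.mk'' (τ * blockSwap ι * blockSwap ι) = Quotient.mk'' τ
      rw [mul_assoc, blockSwap_mul_self, mul_one]
  have hlid : ⇑(TensorProduct.lid ℝ ℝ) = ⇑(TensorProduct.lid ℝ ℝ).toLinearMap := rfl
  rw [AlternatingMap.domCoprod_apply, AlternatingMap.domCoprod_apply,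
    MultilinearMap.sum_apply, MultilinearMap.sum_apply, hlid, map_sum, map_sum, Finset.mul_sum]
  refine Fintype.sum_bijective φ hφ.bijective _ _ fun σ => ?_
  induction σ using Quotient.inductionOn' with
  | h τ =>
    have hφτ : φ (Quotient.mk'' τ) = Quotient.mk'' (τ * blockSwap ι) := rfl
    rw [hφτ, AlternatingMap.domCoprod.summand_mk'', AlternatingMap.domCoprod.summand_mk'']
    simp only [MultilinearMap.smul_apply, MultilinearMap.domDomCongr_apply,
      MultilinearMap.domCoprod_apply, AlternatingMap.coe_multilinearMap,
      Units.smul_def]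
    rw [show ∀ (k : ℤ) (f : MultilinearMap ℝ (fun _ : ι ⊕ ι => Mᵣ) (TensorProduct ℝ ℝ ℝ)) (u : ι ⊕ ι → Mᵣ), (k • f) u = k • f u from fun _ _ _ => rfl,
      show ∀ (k : ℤ) (f : MultilinearMap ℝ (fun _ : ι ⊕ ι => Mᵣ) (TensorProduct ℝ ℝ ℝ)) (u : ι ⊕ ι → Mᵣ), (k • f) u = k • f u from fun _ _ _ => rfl]
    simp only [MultilinearMap.domDomCongr_apply, MultilinearMap.domCoprod_apply,
      AlternatingMap.coe_multilinearMap]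
    rw [map_zsmul, map_zsmul]
    simp only [TensorProduct.lid_tmul, smul_eq_mul, zsmul_eq_mul]
    have hsign : ((Equiv.Perm.sign (τ * blockSwap ι) : ℤ) : ℝ)
        = ((-1 : ℝ) ^ (Fintype.card ι)) * ((Equiv.Perm.sign τ : ℤ) : ℝ) := by
      rw [map_mul, blockSwap_sign]
      push_cast
      ring
    have harg : ∀ x, (τ * blockSwap ι) x = τ (Sum.swap x) := by
      intro x; simp [Equiv.Perm.mul_apply, blockSwap_apply]
    simp only [harg, Sum.swap_inl, Sum.swap_inr]
    rw [hsign]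
    simp only [← hlid, TensorProduct.lid_tmul, smul_eq_mul]
    have h1 : ((-1 : ℝ)) ^ (Fintype.card ι * 2) = 1 := by
      rw [mul_comm, pow_mul]
      norm_num
    ring_nf
    rw [h1]
    ring

variable {M N : Type*} [AddCommGroup M] [Module ℝ M] [AddCommGroup N] [Module ℝ N]

theorem alt_neg_inputs (f : M [⋀^ι]→ₗ[ℝ] N) (k : ι → M) :
    f (fun i => -(k i)) = (-1 : ℝ) ^ (Fintype.card ι) • f k := by
  have := (f : MultilinearMap ℝ (fun _ : ι => M) N).map_smul_univ (fun _ => (-1 : ℝ)) k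
  simp only [neg_smul, one_smul, Finset.prod_const, Finset.card_univ] at this
  simpa using this

theorem alt_update_span (f : M [⋀^ι]→ₗ[ℝ] N) (ww : M) (v : ι → M) (aa : ι)
    (U : Finset ι) (haU : aa ∉ U)
    (hw : ww ∈ Submodule.span ℝ (v '' (U : Set ι))) :
    f (Function.update v aa ww) = 0 := by
  induction hw using Submodule.span_induction with
  | mem x hx =>
    obtain ⟨t, ht, rfl⟩ := hx
    have htaa : t ≠ aa := fun h => haU (h ▸ ht)
    exact f.map_eq_zero_of_eq _ (by
      rw [Function.update_self, Function.update_of_ne htaa]) (Ne.symm htaa)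
  | zero => exact f.map_update_zero _ _
  | add x y _ _ hx hy => rw [f.map_update_add, hx, hy, add_zero]
  | smul c x _ hx => rw [f.map_update_smul, hx, smul_zero]

theorem alt_update_add_span (f : M [⋀^ι]→ₗ[ℝ] N) (ww : M) (v : ι → M) (aa : ι)
    (U : Finset ι) (haU : aa ∉ U)
    (hw : ww ∈ Submodule.span ℝ (v '' (U : Set ι))) :
    f (Function.update v aa (v aa + ww)) = f v := by
  rw [f.map_update_add, alt_update_span f ww v aa U haU hw, add_zero,
    Function.update_eq_self]

theorem alt_add_span (f : M [⋀^ι]→ₗ[ℝ] N) (v z : ι → M) (U : Finset ι)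
    (hzU : ∀ s ∈ U, z s = 0)
    (hz : ∀ s, z s ∈ Submodule.span ℝ (v '' (U : Set ι))) :
    f (v + z) = f v := by
  classical
  have main : ∀ T : Finset ι, Disjoint T U →
      f (fun s => v s + if s ∈ T then z s else 0) = f v := by
    intro T
    induction T using Finset.induction with
    | empty => intro _; simp
    | @insert a T haT ih =>
      intro hdisj
      have hdisjT : Disjoint T U := (Finset.disjoint_insert_left.mp hdisj).2
      have haU : a ∉ U := (Finset.disjoint_insert_left.mp hdisj).1
      set w : ι → M := fun s => v s + if s ∈ T then z s else 0 with hw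
      have heq : (fun s => v s + if s ∈ insert a T then z s else 0)
          = Function.update w a (w a + z a) := by
        funext s
        by_cases hsa : s = a
        · subst hsa
          simp [Function.update_self, hw, haT]
        · rw [Function.update_of_ne hsa]
          simp [hw, Finset.mem_insert, hsa]
      rw [heq]
      have hspan : z a ∈ Submodule.span ℝ (w '' (U : Set ι)) := by
        have himg : w '' (U : Set ι) = v '' (U : Set ι) := by
          apply Set.image_congr
          intro s hs
          have : s ∉ T := fun h => (Finset.disjoint_left.mp hdisjT) h hs
          simp [hw, this]
        rw [himg]; exact hz a
      rw [alt_update_add_span f (z a) w a U haU hspan]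
      exact ih hdisjT
  have hvz : v + z = fun s => v s + if s ∈ Finset.univ \ U then z s else 0 := by
    funext s
    by_cases hs : s ∈ U <;> simp [hs, hzU _, Pi.add_apply]
  rw [hvz, main _ (Finset.sdiff_disjoint)]

theorem alt_neg_compLinearMap {M₃ : Type*} [AddCommMonoid M₃] [Module ℝ M₃]
    (f : M [⋀^ι]→ₗ[ℝ] N) (g : M₃ →ₗ[ℝ] M) :
    (-f).compLinearMap g = -(f.compLinearMap g) := by
  ext v; simp

end GeneralAux

/-! ### Analytic auxiliary facts -/

/-- The radial normalization map. -/
def uMap (z : EuclideanSpace ℝ (Fin n)) : EuclideanSpace ℝ (Fin n) := ‖z‖⁻¹ • z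

theorem uMap_neg (z : EuclideanSpace ℝ (Fin n)) : uMap n (-z) = -(uMap n z) := by
  simp [uMap, norm_neg]

theorem uMap_diff {z : EuclideanSpace ℝ (Fin n)} (hz : z ≠ 0) :
    DifferentiableAt ℝ (uMap n) z := by
  have h1 : DifferentiableAt ℝ (fun w : EuclideanSpace ℝ (Fin n) => ‖w‖) z :=
    differentiableAt_fun_id.norm ℝ hz
  exact (h1.inv (norm_ne_zero_iff.mpr hz)).smul differentiableAt_fun_id

theorem fderiv_uMap_neg {z : EuclideanSpace ℝ (Fin n)} (hz : z ≠ 0) :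
    fderiv ℝ (uMap n) (-z) = fderiv ℝ (uMap n) z := by
  have hz' : -z ≠ 0 := neg_ne_zero.mpr hz
  have h1 : (fun w : EuclideanSpace ℝ (Fin n) => uMap n (-w)) = fun w => -(uMap n w) := by
    funext w; exact uMap_neg n w
  have h2 : fderiv ℝ (fun w : EuclideanSpace ℝ (Fin n) => uMap n (-w)) z
      = (fderiv ℝ (uMap n) (-z)).comp (-(ContinuousLinearMap.id ℝ (EuclideanSpace ℝ (Fin n)))) := by
    have := fderiv_comp (𝕜 := ℝ) z (uMap_diff n hz') (differentiable_id.neg z)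
    rw [show (fun w : EuclideanSpace ℝ (Fin n) => uMap n (-w))
        = (uMap n) ∘ (fun w => -w) from rfl, this]
    congr 1
    rw [show (Neg.neg : EuclideanSpace ℝ (Fin n) → _) = -id from rfl, fderiv_neg, fderiv_id]
  have h3 : fderiv ℝ (fun w : EuclideanSpace ℝ (Fin n) => -(uMap n w)) z
      = -(fderiv ℝ (uMap n) z) := fderiv_neg
  rw [h1, h3] at h2
  apply ContinuousLinearMap.ext
  intro w
  have := congrArg (fun (L : EuclideanSpace ℝ (Fin n) →L[ℝ] EuclideanSpace ℝ (Fin n)) =>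
    L (-w)) h2.symm
  simpa using this

/-- `p ↦ p.2.2 - p.1` as a continuous linear map. -/
def LM1 : Conf3 n →L[ℝ] EuclideanSpace ℝ (Fin n) :=
  (ContinuousLinearMap.snd ℝ (EuclideanSpace ℝ (Fin n))
      (EuclideanSpace ℝ (Fin n))).comp
    (ContinuousLinearMap.snd ℝ (EuclideanSpace ℝ (Fin n))
      (EuclideanSpace ℝ (Fin n) × EuclideanSpace ℝ (Fin n)))
  - ContinuousLinearMap.fst ℝ (EuclideanSpace ℝ (Fin n))
      (EuclideanSpace ℝ (Fin n) × EuclideanSpace ℝ (Fin n))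

/-- `p ↦ p.2.2 - p.2.1` as a continuous linear map. -/
def LM2 : Conf3 n →L[ℝ] EuclideanSpace ℝ (Fin n) :=
  (ContinuousLinearMap.snd ℝ (EuclideanSpace ℝ (Fin n))
      (EuclideanSpace ℝ (Fin n))).comp
    (ContinuousLinearMap.snd ℝ (EuclideanSpace ℝ (Fin n))
      (EuclideanSpace ℝ (Fin n) × EuclideanSpace ℝ (Fin n)))
  - (ContinuousLinearMap.fst ℝ (EuclideanSpace ℝ (Fin n))
      (EuclideanSpace ℝ (Fin n))).comp
    (ContinuousLinearMap.snd ℝ (EuclideanSpace ℝ (Fin n))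
      (EuclideanSpace ℝ (Fin n) × EuclideanSpace ℝ (Fin n)))

theorem LM1_apply (p : Conf3 n) : LM1 n p = p.2.2 - p.1 := rfl

theorem LM2_apply (p : Conf3 n) : LM2 n p = p.2.2 - p.2.1 := rfl

/-- The derivative of the reflection `(x₁, x₂, y) ↦ (x₁, x₂, x₁ + x₂ - y)`, a linear map. -/
def TLmap : Conf3 n →ₗ[ℝ] Conf3 n where
  toFun v := (v.1, v.2.1, v.1 + v.2.1 - v.2.2)
  map_add' a b := by
    refine Prod.ext rfl (Prod.ext rfl ?_)
    show (a.1 + b.1) + (a.2.1 + b.2.1) - (a.2.2 + b.2.2)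
      = (a.1 + a.2.1 - a.2.2) + (b.1 + b.2.1 - b.2.2)
    abel
  map_smul' c a := by
    refine Prod.ext rfl (Prod.ext rfl ?_)
    show (c • a.1) + (c • a.2.1) - (c • a.2.2) = c • (a.1 + a.2.1 - a.2.2)
    rw [smul_sub, smul_add]

theorem TLmap_apply (v : Conf3 n) : TLmap n v = (v.1, v.2.1, v.1 + v.2.1 - v.2.2) := rfl

theorem LM2_TLmap (v : Conf3 n) : LM2 n (TLmap n v) = -(LM1 n v) := by
  rw [LM2_apply, TLmap_apply, LM1_apply]
  show v.1 + v.2.1 - v.2.2 - v.2.1 = -(v.2.2 - v.1)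
  abel

theorem LM1_TLmap (v : Conf3 n) : LM1 n (TLmap n v) = -(LM2 n v) := by
  rw [LM1_apply, TLmap_apply, LM2_apply]
  show v.1 + v.2.1 - v.2.2 - v.1 = -(v.2.2 - v.2.1)
  abel

theorem dirMap1_eq : dirMap1 n = (uMap n) ∘ (LM1 n) := by
  funext p; simp [dirMap1, uMap, LM1_apply]

theorem dirMap2_eq : dirMap2 n = (uMap n) ∘ (LM2 n) := by
  funext p; simp [dirMap2, uMap, LM2_apply]

theorem fderiv_dirMap1 (p : Conf3 n) (h : p.2.2 - p.1 ≠ 0) :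
    fderiv ℝ (dirMap1 n) p = (fderiv ℝ (uMap n) (p.2.2 - p.1)).comp (LM1 n) := by
  rw [dirMap1_eq]
  rw [fderiv_comp p (by rw [LM1_apply]; exact uMap_diff n h) (LM1 n).differentiableAt]
  rw [(LM1 n).fderiv, LM1_apply]

theorem fderiv_dirMap2 (p : Conf3 n) (h : p.2.2 - p.2.1 ≠ 0) :
    fderiv ℝ (dirMap2 n) p = (fderiv ℝ (uMap n) (p.2.2 - p.2.1)).comp (LM2 n) := by
  rw [dirMap2_eq]
  rw [fderiv_comp p (by rw [LM2_apply]; exact uMap_diff n h) (LM2 n).differentiableAt]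
  rw [(LM2 n).fderiv, LM2_apply]

theorem formPullback_dirMap1
    (ω : EuclideanSpace ℝ (Fin n) →
      AlternatingMap ℝ (EuclideanSpace ℝ (Fin n)) ℝ (Fin (n - 1)))
    (a b c : EuclideanSpace ℝ (Fin n)) (h : c - a ≠ 0) :
    formPullback n ω (dirMap1 n) (a, b, c)
      = (ω (uMap n (c - a))).compLinearMap
          (((fderiv ℝ (uMap n) (c - a)).comp (LM1 n) :
            Conf3 n →L[ℝ] EuclideanSpace ℝ (Fin n)) :
            Conf3 n →ₗ[ℝ] EuclideanSpace ℝ (Fin n)) := by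
  unfold formPullback
  rw [fderiv_dirMap1 n (a, b, c) h]
  rfl

theorem formPullback_dirMap2
    (ω : EuclideanSpace ℝ (Fin n) →
      AlternatingMap ℝ (EuclideanSpace ℝ (Fin n)) ℝ (Fin (n - 1)))
    (a b c : EuclideanSpace ℝ (Fin n)) (h : c - b ≠ 0) :
    formPullback n ω (dirMap2 n) (a, b, c)
      = (ω (uMap n (c - b))).compLinearMap
          (((fderiv ℝ (uMap n) (c - b)).comp (LM2 n) :
            Conf3 n →L[ℝ] EuclideanSpace ℝ (Fin n)) :
            Conf3 n →ₗ[ℝ] EuclideanSpace ℝ (Fin n)) := by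
  unfold formPullback
  rw [fderiv_dirMap2 n (a, b, c) h]
  rfl


theorem stmt_0
    (hn : 2 ≤ n)
    (ω : EuclideanSpace ℝ (Fin n) →
      AlternatingMap ℝ (EuclideanSpace ℝ (Fin n)) ℝ (Fin (n - 1)))
    -- `f*ω = (-1)^n ω` for the antipodal map `f(x) = -x`
    (hω : ∀ (x : EuclideanSpace ℝ (Fin n)) (v : Fin (n - 1) → EuclideanSpace ℝ (Fin n)),
      ω (-x) (fun i => -(v i)) = (-1 : ℝ) ^ n * ω x v)
    (x₁ x₂ : EuclideanSpace ℝ (Fin n)) (hx : x₁ ≠ x₂)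
    -- arbitrary constant horizontal vectors, filling the remaining `n - 2` slots
    (w : Fin (n - 2) → EuclideanSpace ℝ (Fin n) × EuclideanSpace ℝ (Fin n)) :
    (∫ y : EuclideanSpace ℝ (Fin n),
      (TensorProduct.lid ℝ ℝ)
        (((formPullback n ω (dirMap1 n) (x₁, x₂, y)).domCoprod
            (formPullback n ω (dirMap2 n) (x₁, x₂, y)))
          (fun s : Fin (n - 1) ⊕ Fin (n - 1) =>
            Sum.elim
              -- the `n` vertical vectors `∂/∂y_i` …
              (fun i : Fin n =>
                ((0, 0, EuclideanSpace.single i (1 : ℝ)) : Conf3 n))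
              -- … and the `n-2` horizontal vectors `w_j`
              (fun j : Fin (n - 2) => (((w j).1, (w j).2, 0) : Conf3 n))
              (finSumFinEquiv.symm
                ((finCongr (by omega : (n - 1) + (n - 1) = n + (n - 2)))
                  (finSumFinEquiv s)))))) = 0 := by
  classical
  have hco : (n - 1) + (n - 1) = n + (n - 2) := by omega
  set ε : Fin (n - 1) ⊕ Fin (n - 1) ≃ Fin n ⊕ Fin (n - 2) :=
    (finSumFinEquiv.trans (finCongr hco)).trans finSumFinEquiv.symm with hε
  set V : Fin (n - 1) ⊕ Fin (n - 1) → Conf3 n := fun s =>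
    Sum.elim
      (fun i : Fin n => ((0, 0, EuclideanSpace.single i (1 : ℝ)) : Conf3 n))
      (fun j : Fin (n - 2) => (((w j).1, (w j).2, 0) : Conf3 n))
      (ε s) with hV
  set F : EuclideanSpace ℝ (Fin n) → ℝ := fun y =>
    (TensorProduct.lid ℝ ℝ)
      (((formPullback n ω (dirMap1 n) (x₁, x₂, y)).domCoprod
          (formPullback n ω (dirMap2 n) (x₁, x₂, y))) V) with hF
  show (∫ y : EuclideanSpace ℝ (Fin n), F y) = 0
  -- consequence of the antipodal symmetry of ω
  have hodd : ((-1 : ℝ) ^ n) * ((-1 : ℝ) ^ (n - 1)) = -1 := by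
    rw [← pow_add]
    have h2 : n + (n - 1) = 2 * (n - 1) + 1 := by omega
    rw [h2]
    exact Odd.neg_one_pow ⟨n - 1, rfl⟩
  have ωneg : ∀ x : EuclideanSpace ℝ (Fin n), ω (-x) = -(ω x) := by
    intro x
    ext v
    have h1 := hω x (fun i => -(v i))
    simp only [neg_neg] at h1
    rw [AlternatingMap.neg_apply, h1, alt_neg_inputs (ω x) v, Fintype.card_fin,
      smul_eq_mul, ← mul_assoc, hodd]
    ring
  -- the key pointwise antisymmetry
  have key : ∀ y : EuclideanSpace ℝ (Fin n), y ≠ x₁ → y ≠ x₂ →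
      F (x₁ + x₂ - y) = -F y := by
    intro y hy1 hy2
    have hu1 : y - x₁ ≠ 0 := sub_ne_zero.mpr hy1
    have hu2 : y - x₂ ≠ 0 := sub_ne_zero.mpr hy2
    set Du1 := fderiv ℝ (uMap n) (y - x₁) with hDu1
    set Du2 := fderiv ℝ (uMap n) (y - x₂) with hDu2
    set C : AlternatingMap ℝ (Conf3 n) ℝ (Fin (n - 1)) :=
      (ω (uMap n (y - x₁))).compLinearMap
        ((Du1.comp (LM1 n) : Conf3 n →L[ℝ] EuclideanSpace ℝ (Fin n)) :
          Conf3 n →ₗ[ℝ] EuclideanSpace ℝ (Fin n)) with hCdef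
    set D : AlternatingMap ℝ (Conf3 n) ℝ (Fin (n - 1)) :=
      (ω (uMap n (y - x₂))).compLinearMap
        ((Du2.comp (LM2 n) : Conf3 n →L[ℝ] EuclideanSpace ℝ (Fin n)) :
          Conf3 n →ₗ[ℝ] EuclideanSpace ℝ (Fin n)) with hDdef
    set A : AlternatingMap ℝ (Conf3 n) ℝ (Fin (n - 1)) :=
      (ω (uMap n (y - x₂))).compLinearMap
        ((Du2.comp (LM1 n) : Conf3 n →L[ℝ] EuclideanSpace ℝ (Fin n)) :
          Conf3 n →ₗ[ℝ] EuclideanSpace ℝ (Fin n)) with hAdef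
    set B : AlternatingMap ℝ (Conf3 n) ℝ (Fin (n - 1)) :=
      (ω (uMap n (y - x₁))).compLinearMap
        ((Du1.comp (LM2 n) : Conf3 n →L[ℝ] EuclideanSpace ℝ (Fin n)) :
          Conf3 n →ₗ[ℝ] EuclideanSpace ℝ (Fin n)) with hBdef
    have e1 : (x₁ + x₂ - y) - x₁ = -(y - x₂) := by abel
    have e2 : (x₁ + x₂ - y) - x₂ = -(y - x₁) := by abel
    have hC : formPullback n ω (dirMap1 n) (x₁, x₂, y) = C :=
      formPullback_dirMap1 n ω x₁ x₂ y hu1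
    have hD : formPullback n ω (dirMap2 n) (x₁, x₂, y) = D :=
      formPullback_dirMap2 n ω x₁ x₂ y hu2
    have hA' : formPullback n ω (dirMap1 n) (x₁, x₂, x₁ + x₂ - y) = -A := by
      rw [formPullback_dirMap1 n ω x₁ x₂ (x₁ + x₂ - y)
        (by rw [e1]; exact neg_ne_zero.mpr hu2), e1, uMap_neg, fderiv_uMap_neg n hu2,
        ωneg, hAdef, hDu2]
      exact alt_neg_compLinearMap _ _
    have hB' : formPullback n ω (dirMap2 n) (x₁, x₂, x₁ + x₂ - y) = -B := by
      rw [formPullback_dirMap2 n ω x₁ x₂ (x₁ + x₂ - y)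
        (by rw [e2]; exact neg_ne_zero.mpr hu1), e2, uMap_neg, fderiv_uMap_neg n hu1,
        ωneg, hBdef, hDu1]
      exact alt_neg_compLinearMap _ _
    -- relations through the reflection differential
    have hDT : D.compLinearMap (TLmap n) = ((-1 : ℝ) ^ (n - 1)) • A := by
      ext v
      simp only [AlternatingMap.compLinearMap_apply, AlternatingMap.smul_apply,
        hDdef, hAdef, ContinuousLinearMap.coe_coe, ContinuousLinearMap.coe_comp',
        Function.comp_apply]
      have hv : (fun i => Du2 (LM2 n (TLmap n (v i)))) =
          fun i => -(Du2 (LM1 n (v i))) := by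
        funext i; rw [LM2_TLmap, map_neg]
      rw [hv, alt_neg_inputs (ω (uMap n (y - x₂))) (fun i => Du2 (LM1 n (v i))),
        Fintype.card_fin]
    have hCT : C.compLinearMap (TLmap n) = ((-1 : ℝ) ^ (n - 1)) • B := by
      ext v
      simp only [AlternatingMap.compLinearMap_apply, AlternatingMap.smul_apply,
        hCdef, hBdef, ContinuousLinearMap.coe_coe, ContinuousLinearMap.coe_comp',
        Function.comp_apply]
      have hv : (fun i => Du1 (LM1 n (TLmap n (v i)))) =
          fun i => -(Du1 (LM2 n (v i))) := by
        funext i; rw [LM1_TLmap, map_neg]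
      rw [hv, alt_neg_inputs (ω (uMap n (y - x₁))) (fun i => Du1 (LM2 n (v i))),
        Fintype.card_fin]
    have hsq : ((-1 : ℝ) ^ (n - 1)) * ((-1 : ℝ) ^ (n - 1)) = 1 := by
      rw [← pow_add]
      exact Even.neg_one_pow ⟨n - 1, by ring⟩
    have hAB : A.domCoprod B = (D.domCoprod C).compLinearMap (TLmap n) := by
      have hA2 : A = ((-1 : ℝ) ^ (n - 1)) • (D.compLinearMap (TLmap n)) := by
        rw [hDT, smul_smul, hsq, one_smul]
      have hB2 : B = ((-1 : ℝ) ^ (n - 1)) • (C.compLinearMap (TLmap n)) := by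
        rw [hCT, smul_smul, hsq, one_smul]
      rw [hA2, hB2, my_domCoprod_smul_smul, hsq, one_smul, my_domCoprod_compLinearMap]
    have hFy' : F (x₁ + x₂ - y)
        = (TensorProduct.lid ℝ ℝ) ((D.domCoprod C) (fun s => TLmap n (V s))) := by
      rw [hF]
      simp only [hA', hB']
      rw [my_domCoprod_neg_neg, hAB, AlternatingMap.compLinearMap_apply]
    -- the corrected vectors
    set Z : Fin (n - 1) ⊕ Fin (n - 1) → Conf3 n := fun s =>
      Sum.elim (fun _ : Fin n => (0 : Conf3 n))
        (fun j : Fin (n - 2) => ((0, 0, (w j).1 + (w j).2) : Conf3 n)) (ε s) with hZ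
    set cs : Fin (n - 1) ⊕ Fin (n - 1) → ℝ := fun s =>
      Sum.elim (fun _ : Fin n => (-1 : ℝ)) (fun _ : Fin (n - 2) => (1 : ℝ)) (ε s) with hcs
    have hTV : (fun s => TLmap n (V s)) = fun s => (cs s) • ((V + Z) s) := by
      funext s
      simp only [hV, hZ, hcs, Pi.add_apply]
      rcases hεs : ε s with i | j <;> simp only [hεs, Sum.elim_inl, Sum.elim_inr]
      · rw [TLmap_apply]
        refine Prod.ext ?_ (Prod.ext ?_ ?_) <;> simp
      · rw [TLmap_apply]
        refine Prod.ext ?_ (Prod.ext ?_ ?_) <;> simp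
    have hprod : (∏ s : Fin (n - 1) ⊕ Fin (n - 1), cs s) = (-1 : ℝ) ^ n := by
      rw [hcs]
      rw [Equiv.prod_comp ε
        (Sum.elim (fun _ : Fin n => (-1 : ℝ)) (fun _ : Fin (n - 2) => (1 : ℝ)))]
      rw [Fintype.prod_sum_type]
      simp
    have hsmul : (D.domCoprod C) (fun s => TLmap n (V s))
        = ((-1 : ℝ) ^ n) • ((D.domCoprod C) (V + Z)) := by
      rw [hTV, ← hprod]
      exact ((D.domCoprod C) :
        MultilinearMap ℝ (fun _ : Fin (n - 1) ⊕ Fin (n - 1) => Conf3 n)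
          (TensorProduct ℝ ℝ ℝ)).map_smul_univ cs (V + Z)
    set U : Finset (Fin (n - 1) ⊕ Fin (n - 1)) :=
      Finset.univ.filter (fun s => (ε s).isLeft) with hU
    have hvert : ∀ x : EuclideanSpace ℝ (Fin n),
        ((0, 0, x) : Conf3 n) ∈ Submodule.span ℝ (V '' (U : Set (Fin (n-1) ⊕ Fin (n-1)))) := by
      intro x
      have hxsum : ((0, 0, x) : Conf3 n)
          = ∑ i : Fin n, x i • ((0, 0, EuclideanSpace.single i (1 : ℝ)) : Conf3 n) := by
        have hx1 : x = ∑ i : Fin n, x i • EuclideanSpace.single i (1 : ℝ) := by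
          have := (EuclideanSpace.basisFun (Fin n) ℝ).sum_repr x
          simp only [EuclideanSpace.basisFun_repr, EuclideanSpace.basisFun_apply] at this
          exact this.symm
        refine Prod.ext ?_ (Prod.ext ?_ ?_) <;> simp [Prod.fst_sum, Prod.snd_sum]
        exact hx1
      rw [hxsum]
      refine Submodule.sum_mem _ fun i _ => Submodule.smul_mem _ _ (Submodule.subset_span ?_)
      refine ⟨ε.symm (Sum.inl i), ?_, ?_⟩
      · simp [hU, Finset.mem_filter]
      · simp [hV]
    have hUZ : (D.domCoprod C) (V + Z) = (D.domCoprod C) V := by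
      refine alt_add_span _ _ _ U ?_ ?_
      · intro s hs
        rw [hU, Finset.mem_filter] at hs
        rcases hεs : ε s with i | j
        · simp [hZ, hεs]
        · rw [hεs] at hs; simp at hs
      · intro s
        rcases hεs : ε s with i | j
        · simp only [hZ, hεs, Sum.elim_inl]
          exact Submodule.zero_mem _
        · simp only [hZ, hεs, Sum.elim_inr]
          exact hvert _
    have hswap : (TensorProduct.lid ℝ ℝ) ((D.domCoprod C) V)
        = ((-1 : ℝ) ^ (n - 1)) * (TensorProduct.lid ℝ ℝ) ((C.domCoprod D) V) := by
      have := my_domCoprod_swap D C V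
      rwa [Fintype.card_fin] at this
    have hFy : F y = (TensorProduct.lid ℝ ℝ) ((C.domCoprod D) V) := by
      rw [hF]
      simp only [hC, hD]
    rw [hFy', hsmul, _root_.map_smul, hUZ, hswap, hFy, smul_eq_mul, ← mul_assoc, hodd]
    ring
  -- integrate
  haveI : Nonempty (Fin n) := ⟨⟨0, by omega⟩⟩
  have hae : ∀ᵐ y : EuclideanSpace ℝ (Fin n), F (x₁ + x₂ - y) = -F y := by
    have h1 : ∀ᵐ y : EuclideanSpace ℝ (Fin n), y ≠ x₁ := by
      rw [ae_iff]
      simpa using measure_singleton (μ := (volume : Measure (EuclideanSpace ℝ (Fin n)))) x₁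
    have h2 : ∀ᵐ y : EuclideanSpace ℝ (Fin n), y ≠ x₂ := by
      rw [ae_iff]
      simpa using measure_singleton (μ := (volume : Measure (EuclideanSpace ℝ (Fin n)))) x₂
    filter_upwards [h1, h2] with y hy1 hy2 using key y hy1 hy2
  have hcov : (∫ y, F y) = ∫ y, F (x₁ + x₂ - y) := by
    have h1 : (∫ y, F (x₁ + x₂ - y)) = ∫ y, F ((x₁ + x₂) + y) := by
      rw [← integral_neg_eq_self (fun y => F ((x₁ + x₂) + y)) volume]
      simp [sub_eq_add_neg]
    rw [h1, integral_add_left_eq_self]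
  have h2 : (∫ y, F (x₁ + x₂ - y)) = ∫ y, -F y := integral_congr_ae hae
  have h3 : (∫ y, -F y) = -∫ y, F y := integral_neg F
  have : (∫ y, F y) = -∫ y, F y := hcov.trans (h2.trans h3)
  linarith

end
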